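/- arXiv:2206.12862 — 2 statements merged into one kernel-verified Lean document; each statement's English description precedes it below -/
import Mathlib

section
/- Let G be an unambiguous CFG (every string has at most one derivation tree from the start symbol) with algebraic representation ⟨[n], π, M, {β_σ}⟩, and let A' = ⟨[n'], π', {A'_σ}⟩ be an HMM. Define β_{G,A'}^{(L)} := Σ_{w ∈ Σ^L} β_G(w) ⊗ vec(A'_w). Then the HMM-probability of the length-L slice of L_G satisfies f_{A'}(L_G ∩ Σ^L) = (π ⊗ e ⊗ π')ᵀ · β_{G,A'}^{(L)}, where e is the all-ones vector in ℝ^{n'}. -/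
open Matrix

/-- A context-free grammar in Chomsky normal form. -/
structure CNF (N α : Type) where
  bin : N → N → N → Prop
  ter : N → α → Prop
  start : N

/-- Derivation trees of a CNF grammar rooted at a given nonterminal, yielding a
given string. -/
inductive Deriv {N α : Type} (G : CNF N α) : N → List α → Type
  | leaf {i : N} {s : α} : G.ter i s → Deriv G i [s]
  | node {i j k : N} {w₁ w₂ : List α} :
      G.bin i j k → w₁ ≠ [] → w₂ ≠ [] →
      Deriv G j w₁ → Deriv G k w₂ → Deriv G i (w₁ ++ w₂)

namespace Deriv

variable {N α : Type} {G : CNF N α}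

theorem yield_ne_nil : ∀ {i : N} {w : List α}, Deriv G i w → w ≠ []
  | _, _, .leaf _ => by simp
  | _, _, .node _ h1 _ _ _ => by simp [h1]

def Splits (α : Type) (w : List α) : Type :=
  {p : List α × List α // p.1 ++ p.2 = w ∧ p.1 ≠ [] ∧ p.2 ≠ []}

def Code (G : CNF N α) (w : List α) : Type :=
  Option (Σ j : N, Σ k : N, Σ p : Splits α w, Deriv G j p.1.1 × Deriv G k p.1.2)

theorem leaf_heq {i : N} {s s' : α} (hs : s = s') (ht : G.ter i s) (ht' : G.ter i s') :
    HEq (Deriv.leaf ht : Deriv G i [s]) (Deriv.leaf ht' : Deriv G i [s']) := by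
  subst hs; rfl

open scoped Classical in
noncomputable def decode {i : N} {w : List α} (hne : Nonempty (Deriv G i w)) :
    Code G w → Deriv G i w
  | none =>
      if h : ∃ s, w = [s] ∧ G.ter i s then
        cast (congrArg (Deriv G i) h.choose_spec.1.symm) (Deriv.leaf h.choose_spec.2)
      else Classical.choice hne
  | some ⟨j, k, ⟨(w₁, w₂), hp, h1, h2⟩, d₁, d₂⟩ =>
      if hb : G.bin i j k then cast (congrArg (Deriv G i) hp) (Deriv.node hb h1 h2 d₁ d₂)
      else Classical.choice hne

theorem decode_surjective {i : N} {w : List α} (hne : Nonempty (Deriv G i w)) :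
    Function.Surjective (decode (G := G) hne) := by
  intro d
  cases d with
  | @leaf i s ht =>
      refine ⟨none, ?_⟩
      have h : ∃ s', [s] = [s'] ∧ G.ter i s' := ⟨s, rfl, ht⟩
      simp only [decode, dif_pos h]
      rw [cast_eq_iff_heq]
      have hs : h.choose = s := by
        have := h.choose_spec.1
        injection this.symm
      exact leaf_heq hs h.choose_spec.2 ht
  | @node i j k w₁ w₂ hb h1 h2 d₁ d₂ =>
      refine ⟨some ⟨j, k, ⟨(w₁, w₂), rfl, h1, h2⟩, d₁, d₂⟩, ?_⟩
      simp only [decode, dif_pos hb]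
      rw [cast_eq_iff_heq]

theorem splits_finite (w : List α) : Finite (Splits α w) := by
  apply Finite.of_injective (fun p : Splits α w => (⟨p.1.1.length, by
    have h := congrArg List.length p.2.1
    simp only [List.length_append] at h
    omega⟩ : Fin (w.length + 1)))
  rintro ⟨⟨a, b⟩, ha, _, _⟩ ⟨⟨c, d⟩, hc, _, _⟩ h
  simp only [Fin.mk.injEq] at h
  obtain ⟨h1, h2⟩ := List.append_inj (ha.trans hc.symm) h
  apply Subtype.ext
  simp_all

theorem derivFinite [Finite N] (G : CNF N α) :
    ∀ (l : ℕ) (w : List α), w.length ≤ l → ∀ i : N, Finite (Deriv G i w) := by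
  intro l
  induction l with
  | zero =>
      intro w hw i
      have : w = [] := List.length_eq_zero_iff.mp (Nat.le_antisymm hw (Nat.zero_le _))
      subst this
      haveI : IsEmpty (Deriv G i []) := ⟨fun d => yield_ne_nil d rfl⟩
      infer_instance
  | succ l ih =>
      intro w hw i
      by_cases hne : Nonempty (Deriv G i w)
      · haveI := splits_finite (α := α) w
        haveI hf : ∀ (j : N) (p : Splits α w), Finite (Deriv G j p.1.1) := by
          intro j p
          apply ih
          have h := congrArg List.length p.2.1
          have h2 : p.1.2.length ≠ 0 := by simpa [List.length_eq_zero_iff] using p.2.2.2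
          simp only [List.length_append] at h
          omega
        haveI hg : ∀ (j : N) (p : Splits α w), Finite (Deriv G j p.1.2) := by
          intro j p
          apply ih
          have h := congrArg List.length p.2.1
          have h1 : p.1.1.length ≠ 0 := by simpa [List.length_eq_zero_iff] using p.2.2.1
          simp only [List.length_append] at h
          omega
        haveI : ∀ (j k : N) (p : Splits α w), Finite (Deriv G j p.1.1 × Deriv G k p.1.2) := by
          intro j k p; exact Finite.instProd
        haveI : ∀ (j k : N), Finite (Σ p : Splits α w, Deriv G j p.1.1 × Deriv G k p.1.2) := by
          intro j k; infer_instance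
        haveI : ∀ (j : N), Finite (Σ k : N, Σ p : Splits α w, Deriv G j p.1.1 × Deriv G k p.1.2) := by
          intro j; infer_instance
        haveI hS : Finite (Σ j : N, Σ k : N, Σ p : Splits α w, Deriv G j p.1.1 × Deriv G k p.1.2) := by
          infer_instance
        haveI : Finite (Code G w) :=
          Finite.of_equiv _ (Equiv.optionEquivSumPUnit.{0, 0}
            (Σ j : N, Σ k : N, Σ p : Splits α w, Deriv G j p.1.1 × Deriv G k p.1.2)).symm
        exact Finite.of_surjective _ (decode_surjective hne)
      · haveI := not_nonempty_iff.mp hne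
        infer_instance

end Deriv

open scoped Classical in
theorem card_cast {n : ℕ} {α : Type} (G : CNF (Fin n) α)
    (hU : ∀ w : List α, Nat.card (Deriv G G.start w) ≤ 1) (w : List α) :
    (Nat.card (Deriv G G.start w) : ℝ) =
      if Nonempty (Deriv G G.start w) then 1 else 0 := by
  classical
  by_cases h : Nonempty (Deriv G G.start w)
  · haveI := Deriv.derivFinite G w.length w le_rfl G.start
    haveI := h
    have h1 : 0 < Nat.card (Deriv G G.start w) := Nat.card_pos
    have h2 := hU w
    have : Nat.card (Deriv G G.start w) = 1 := by omega
    simp [this, h]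
  · haveI := not_nonempty_iff.mp h
    simp [h, Nat.card_of_isEmpty]

open scoped Classical in
/-- For an unambiguous CFG `G` and an HMM `A'`:
`f_{A'}(L_G ∩ Σ^L) = (π ⊗ e ⊗ π')ᵀ · β_{G,A'}^{(L)}`, where
`β_{G,A'}^{(L)} = Σ_{w ∈ Σ^L} β_G(w) ⊗ vec(A'_w)`, `π` is the indicator vector
of the start symbol, and `e` the all-ones vector in `ℝ^{n'}`. -/
theorem stmt6 {n n' : ℕ} {α : Type} [Fintype α] (G : CNF (Fin n) α)
    (hU : ∀ w : List α, Nat.card (Deriv G G.start w) ≤ 1)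
    (π' : Fin n' → ℝ) (A : α → Matrix (Fin n') (Fin n') ℝ)
    (hπ0 : ∀ i, 0 ≤ π' i) (hπ1 : ∑ i, π' i = 1)
    (hA0 : ∀ s i j, 0 ≤ A s i j)
    (hstoch : ∀ i, ∑ s : α, ∑ j, A s i j = 1)
    (L : ℕ) :
    (∑ w : Fin L → α,
        if Nonempty (Deriv G G.start (List.ofFn w)) then
          π' ⬝ᵥ ((List.ofFn w).map A).prod.mulVec (fun _ => (1 : ℝ))
        else 0) =
      ∑ p : Fin n × (Fin n' × Fin n'),
        ((if p.1 = G.start then (1 : ℝ) else 0) * (π' p.2.1 * (1 : ℝ))) *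
          (∑ w : Fin L → α,
            (Nat.card (Deriv G p.1 (List.ofFn w)) : ℝ) *
              ((List.ofFn w).map A).prod p.2.1 p.2.2) := by
  rw [Fintype.sum_prod_type]
  simp only [ite_mul, one_mul, zero_mul]
  rw [Finset.sum_comm]
  simp only [Finset.sum_ite_eq', Finset.mem_univ, if_true]
  simp only [Finset.mul_sum]
  rw [Finset.sum_comm]
  refine Finset.sum_congr rfl fun w _ => ?_
  rw [card_cast G hU]
  by_cases h : Nonempty (Deriv G G.start (List.ofFn w))
  · simp [h, dotProduct, Matrix.mulVec, Fintype.sum_prod_type, Finset.mul_sum]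
  · simp [h]
end

section
/- Let {(uᵢ, vᵢ)}_{i∈[N]} be pairs of strings over Σ and build, over the extended alphabet Σₑ = Σ ∪ {1,…,N} ∪ {#, &}, the languages L₁ = { i₁…i_k & j_l…j₁ # v_{j₁}…v_{j_l} & u_{i_k}^R…u_{i₁}^R : k,l ≥ 1, iₐ, jₐ ∈ [N] } and L₂ = { w & w^R # w' & w'^R : w, w' ∈ Σₑ'* } (for appropriate subalphabets). Then a word x lies in L₁ ∩ L₂ if and only if x = i₁…i_k & i_k…i₁ # v_{i₁}…v_{i_k} & u_{i_k}^R…u_{i₁}^R for some sequence i₁,…,i_k with u_{i₁}…u_{i_k} = v_{i₁}…v_{i_k}; moreover |x| = 2(k + |u_{i₁}…u_{i_k}|) + 3. Hence for any M > 0, L₁ ∩ L₂ contains a word of length at most 2M + 3 iff there is a PCP solution i₁,…,i_k with k + |u_{i₁}…u_{i_k}| ≤ M. -/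
/-- The extended alphabet `Σₑ = Σ ∪ {1,…,N} ∪ {#, &}`. -/
abbrev ExtAlpha (α : Type) (N : ℕ) : Type := α ⊕ (Fin N ⊕ Bool)

/-- Embedding of an original-alphabet symbol. -/
def lit {α : Type} {N : ℕ} (s : α) : ExtAlpha α N := Sum.inl s

/-- Embedding of an index symbol `i ∈ [N]`. -/
def idx {α : Type} {N : ℕ} (i : Fin N) : ExtAlpha α N := Sum.inr (Sum.inl i)

/-- The separator `#`. -/
def hashS {α : Type} {N : ℕ} : ExtAlpha α N := Sum.inr (Sum.inr true)

/-- The separator `&`. -/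
def ampS {α : Type} {N : ℕ} : ExtAlpha α N := Sum.inr (Sum.inr false)

/-- Embedding of an original-alphabet string. -/
def emb {α : Type} {N : ℕ} (w : List α) : List (ExtAlpha α N) := w.map lit

/-- `L₁ = { i₁…i_k & j_l…j₁ # v_{j₁}…v_{j_l} & u_{i_k}^R…u_{i₁}^R : k, l ≥ 1 }`. -/
def PCPL1 {α : Type} {N : ℕ} (u v : Fin N → List α) : Set (List (ExtAlpha α N)) :=
  {x | ∃ is js : List (Fin N), is ≠ [] ∧ js ≠ [] ∧
    x = (is.map idx) ++ [ampS] ++ (js.map idx).reverse ++ [hashS] ++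
          emb ((js.map v).flatten) ++ [ampS] ++ (emb ((is.map u).flatten)).reverse}

/-- `L₂ = { w & w^R # w' & w'^R }` with `w` over the index subalphabet and `w'`
over the original subalphabet. -/
def PCPL2 (α : Type) (N : ℕ) : Set (List (ExtAlpha α N)) :=
  {x | ∃ (w : List (Fin N)) (w' : List α),
    x = (w.map idx) ++ [ampS] ++ (w.map idx).reverse ++ [hashS] ++
          emb w' ++ [ampS] ++ (emb w').reverse}


section Aux
variable {β : Type*}

lemma split_unique {c : β} : ∀ {a a' b b' : List β}, c ∉ a → c ∉ a' →
    a ++ c :: b = a' ++ c :: b' → a = a' ∧ b = b' := by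
  intro a
  induction a with
  | nil =>
    intro a' b b' _ h2 h
    cases a' with
    | nil => simpa using h
    | cons x t =>
      simp only [List.nil_append, List.cons_append, List.cons.injEq] at h
      exact absurd (List.mem_cons.2 (Or.inl h.1)) h2
  | cons x t ih =>
    intro a' b b' h1 h2 h
    cases a' with
    | nil =>
      simp only [List.nil_append, List.cons_append, List.cons.injEq] at h
      exact absurd (List.mem_cons.2 (Or.inl h.1.symm)) h1
    | cons y s =>
      simp only [List.cons_append, List.cons.injEq] at h
      obtain ⟨rfl, h⟩ := h
      obtain ⟨ha, hb⟩ := ih (fun hc => h1 (List.mem_cons_of_mem _ hc))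
        (fun hc => h2 (List.mem_cons_of_mem _ hc)) h
      exact ⟨by rw [ha], hb⟩

end Aux

lemma idx_inj {α : Type} {N : ℕ} : Function.Injective (idx : Fin N → ExtAlpha α N) := by
  intro i j h; simpa [idx] using h

lemma lit_inj {α : Type} {N : ℕ} : Function.Injective (lit : α → ExtAlpha α N) := by
  intro i j h; simpa [lit] using h

lemma amp_not_mem_idx {α : Type} {N : ℕ} (l : List (Fin N)) :
    (ampS : ExtAlpha α N) ∉ l.map idx := by
  simp [List.mem_map, idx, ampS]

lemma hash_not_mem_idx {α : Type} {N : ℕ} (l : List (Fin N)) :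
    (hashS : ExtAlpha α N) ∉ l.map idx := by
  simp [List.mem_map, idx, hashS]

lemma amp_not_mem_emb {α : Type} {N : ℕ} (w : List α) :
    (ampS : ExtAlpha α N) ∉ emb w := by
  simp [emb, List.mem_map, lit, ampS]

lemma hash_not_mem_idx_rev {α : Type} {N : ℕ} (l : List (Fin N)) :
    (hashS : ExtAlpha α N) ∉ (l.map idx).reverse := by
  rw [List.mem_reverse]; exact hash_not_mem_idx l

lemma hash_not_mem_prefix {α : Type} {N : ℕ} (a b : List (Fin N)) :
    (hashS : ExtAlpha α N) ∉ a.map idx ++ ampS :: (b.map idx).reverse := by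
  intro h
  rcases List.mem_append.1 h with h | h
  · exact hash_not_mem_idx a h
  · rcases List.mem_cons.1 h with h | h
    · simp [hashS, ampS] at h
    · exact hash_not_mem_idx_rev b h

/-- A word lies in `L₁ ∩ L₂` iff it encodes a Post correspondence
`u_{i₁}…u_{i_k} = v_{i₁}…v_{i_k}`, in which case its length is
`2(k + |u_{i₁}…u_{i_k}|) + 3`; hence `L₁ ∩ L₂` contains a word of length at most
`2M + 3` iff there is a PCP solution with `k + |u_{i₁}…u_{i_k}| ≤ M`. -/
theorem stmt17 {α : Type} {N : ℕ} (u v : Fin N → List α) :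
    (∀ x : List (ExtAlpha α N),
      x ∈ PCPL1 u v ∩ PCPL2 α N ↔
        ∃ is : List (Fin N), is ≠ [] ∧
          (is.map u).flatten = (is.map v).flatten ∧
          x = (is.map idx) ++ [ampS] ++ (is.map idx).reverse ++ [hashS] ++
                emb ((is.map v).flatten) ++ [ampS] ++
                (emb ((is.map u).flatten)).reverse ∧
          x.length = 2 * (is.length + ((is.map u).flatten).length) + 3) ∧
    (∀ M : ℕ, 0 < M →
      ((∃ x ∈ PCPL1 u v ∩ PCPL2 α N, x.length ≤ 2 * M + 3) ↔
        ∃ is : List (Fin N), is ≠ [] ∧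
          (is.map u).flatten = (is.map v).flatten ∧
          is.length + ((is.map u).flatten).length ≤ M)) := by
  have key : ∀ x : List (ExtAlpha α N),
      x ∈ PCPL1 u v ∩ PCPL2 α N ↔
        ∃ is : List (Fin N), is ≠ [] ∧
          (is.map u).flatten = (is.map v).flatten ∧
          x = (is.map idx) ++ [ampS] ++ (is.map idx).reverse ++ [hashS] ++
                emb ((is.map v).flatten) ++ [ampS] ++
                (emb ((is.map u).flatten)).reverse ∧
          x.length = 2 * (is.length + ((is.map u).flatten).length) + 3 := by
    intro x
    constructor
    · rintro ⟨⟨is, js, his, hjs, h1⟩, ⟨w, w', h2⟩⟩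
      rw [h1] at h2
      simp only [List.append_assoc, List.singleton_append] at h2
      -- split at hashS
      rw [← List.append_assoc (is.map idx), ← List.append_assoc (w.map idx)] at h2
      obtain ⟨hpre, hsuf⟩ := split_unique (hash_not_mem_prefix is js)
        (hash_not_mem_prefix w w) h2
      obtain ⟨hisw, hjsw⟩ := split_unique (amp_not_mem_idx is) (amp_not_mem_idx w) hpre
      obtain ⟨hVw, hUw⟩ := split_unique (amp_not_mem_emb _) (amp_not_mem_emb _) hsuf
      have hisw' : is = w := List.map_injective_iff.2 idx_inj hisw
      have hjsw' : js = w := by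
        have := List.reverse_injective hjsw
        exact List.map_injective_iff.2 idx_inj this
      have hV : (js.map v).flatten = w' := List.map_injective_iff.2 lit_inj hVw
      have hU : (is.map u).flatten = w' := by
        have := List.reverse_injective hUw
        exact List.map_injective_iff.2 lit_inj this
      have hjs_is : js = is := hjsw'.trans hisw'.symm
      subst hjs_is
      have heq : (js.map u).flatten = (js.map v).flatten := hU.trans hV.symm
      refine ⟨js, his, heq, by rw [h1], ?_⟩
      rw [h1]
      have hlen : ((js.map u).flatten).length = ((js.map v).flatten).length := by
        rw [heq]
      simp only [List.length_append, List.length_map, List.length_reverse,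
        List.length_cons, List.length_nil, List.length_singleton, emb] at hlen ⊢
      omega
    · rintro ⟨is, his, heq, hx, hlen⟩
      refine ⟨⟨is, is, his, his, hx⟩, ⟨is, (is.map v).flatten, ?_⟩⟩
      rw [hx, heq]
  refine ⟨key, fun M hM => ?_⟩
  constructor
  · rintro ⟨x, hx, hxlen⟩
    obtain ⟨is, his, heq, -, hlen⟩ := (key x).1 hx
    exact ⟨is, his, heq, by omega⟩
  · rintro ⟨is, his, heq, hle⟩
    set x := (is.map idx) ++ [ampS] ++ (is.map idx).reverse ++ [hashS] ++
          emb ((is.map v).flatten) ++ [ampS] ++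
          (emb ((is.map u).flatten)).reverse with hxdef
    have hlen : x.length = 2 * (is.length + ((is.map u).flatten).length) + 3 := by
      have hl : ((is.map u).flatten).length = ((is.map v).flatten).length := by rw [heq]
      simp only [hxdef, List.length_append, List.length_map, List.length_reverse,
        List.length_nil, List.length_singleton, emb] at hl ⊢
      omega
    refine ⟨x, (key x).2 ⟨is, his, heq, rfl, hlen⟩, by omega⟩
end
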